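/- Let k', a, M > 0 and let v : ℝ_{≥0} → ℝ_{≥0} be differentiable and satisfy v'(t) ≤ -2k'·v(t) + 2aM·√(v(t)) for all t ≥ 0. Then for all t ≥ 0, √(v(t)) ≤ √(v(0))·e^{-k't} + (aM/k')·(1 - e^{-k't}); in particular limsup_{t→∞} √(v(t)) ≤ aM/k'. -/

import Mathlib

open Real Filter

lemma stmt10_key (k' a M : ℝ) (hk : 0 < k') (ha : 0 < a) (hM : 0 < M)
    (v v' : ℝ → ℝ) (hnn : ∀ t : ℝ, 0 ≤ t → 0 ≤ v t)
    (hd : ∀ t : ℝ, 0 ≤ t → HasDerivAt v (v' t) t)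
    (hineq : ∀ t : ℝ, 0 ≤ t → v' t ≤ -2 * k' * v t + 2 * a * M * Real.sqrt (v t))
    (δ : ℝ) (hδ : 0 < δ) (t : ℝ) (ht : 0 ≤ t) :
    Real.sqrt (Real.exp (2 * k' * t) * v t + δ) ≤
      Real.sqrt (v 0 + δ) + (a * M / k') * (Real.exp (k' * t) - 1) := by
  set φ : ℝ → ℝ := fun s => Real.sqrt (Real.exp (2 * k' * s) * v s + δ) with hφ
  set G : ℝ → ℝ := fun s => a * M / k' * Real.exp (k' * s) - φ s with hG
  -- positivity of the argument of sqrt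
  have harg : ∀ s : ℝ, 0 ≤ s → 0 < Real.exp (2 * k' * s) * v s + δ := by
    intro s hs
    have h0 := mul_nonneg (Real.exp_nonneg (2 * k' * s)) (hnn s hs)
    linarith
  -- derivative of φ at points s ≥ 0
  have hφd : ∀ s : ℝ, 0 ≤ s → HasDerivAt φ
      (1 / (2 * Real.sqrt (Real.exp (2 * k' * s) * v s + δ)) *
        (Real.exp (2 * k' * s) * (2 * k') * v s + Real.exp (2 * k' * s) * v' s)) s := by
    intro s hs
    have he : HasDerivAt (fun s : ℝ => Real.exp (2 * k' * s)) (Real.exp (2 * k' * s) * (2 * k')) s := by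
      have := ((hasDerivAt_id s).const_mul (2 * k')).exp
      simpa using this
    have hprod := (he.mul (hd s hs)).add_const δ
    have hsq := Real.hasDerivAt_sqrt (ne_of_gt (harg s hs))
    have := hsq.comp s hprod
    simpa [φ, Function.comp_def, mul_comm, mul_assoc, mul_left_comm] using this
  have hGd : ∀ s : ℝ, 0 ≤ s → HasDerivAt G
      (a * M * Real.exp (k' * s) -
        1 / (2 * Real.sqrt (Real.exp (2 * k' * s) * v s + δ)) *
          (Real.exp (2 * k' * s) * (2 * k') * v s + Real.exp (2 * k' * s) * v' s)) s := by
    intro s hs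
    have he : HasDerivAt (fun s : ℝ => a * M / k' * Real.exp (k' * s))
        (a * M / k' * (Real.exp (k' * s) * k')) s := by
      have : HasDerivAt (fun s : ℝ => Real.exp (k' * s)) (Real.exp (k' * s) * k') s := by
        simpa using ((hasDerivAt_id s).const_mul k').exp
      exact this.const_mul _
    have := he.sub (hφd s hs)
    have hkne : k' ≠ 0 := ne_of_gt hk
    have heq : a * M / k' * (Real.exp (k' * s) * k') = a * M * Real.exp (k' * s) := by
      field_simp
    rw [heq] at this
    exact this
  -- the derivative of G is nonnegative on s ≥ 0
  have hG0 : ∀ s : ℝ, 0 ≤ s →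
      0 ≤ a * M * Real.exp (k' * s) -
        1 / (2 * Real.sqrt (Real.exp (2 * k' * s) * v s + δ)) *
          (Real.exp (2 * k' * s) * (2 * k') * v s + Real.exp (2 * k' * s) * v' s) := by
    intro s hs
    have hsp := harg s hs
    have hsqpos : 0 < Real.sqrt (Real.exp (2 * k' * s) * v s + δ) := Real.sqrt_pos.2 hsp
    rw [sub_nonneg, div_mul_eq_mul_div, one_mul, div_le_iff₀ (by positivity)]
    -- numerator bound
    have h1 : Real.exp (2 * k' * s) * (2 * k') * v s + Real.exp (2 * k' * s) * v' s ≤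
        Real.exp (2 * k' * s) * (2 * a * M * Real.sqrt (v s)) := by
      have := hineq s hs
      nlinarith [Real.exp_pos (2 * k' * s)]
    have hexp2 : Real.exp (2 * k' * s) = Real.exp (k' * s) ^ 2 := by
      rw [sq, ← Real.exp_add]; ring_nf
    have h2 : Real.exp (2 * k' * s) * Real.sqrt (v s) =
        Real.exp (k' * s) * Real.sqrt (Real.exp (2 * k' * s) * v s) := by
      rw [hexp2, Real.sqrt_mul (by positivity), Real.sqrt_sq (Real.exp_nonneg _)]
      ring
    have h3 : Real.sqrt (Real.exp (2 * k' * s) * v s) ≤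
        Real.sqrt (Real.exp (2 * k' * s) * v s + δ) :=
      Real.sqrt_le_sqrt (by linarith)
    calc Real.exp (2 * k' * s) * (2 * k') * v s + Real.exp (2 * k' * s) * v' s
        ≤ Real.exp (2 * k' * s) * (2 * a * M * Real.sqrt (v s)) := h1
      _ = 2 * a * M * (Real.exp (2 * k' * s) * Real.sqrt (v s)) := by ring
      _ = 2 * a * M * (Real.exp (k' * s) * Real.sqrt (Real.exp (2 * k' * s) * v s)) := by rw [h2]
      _ ≤ 2 * a * M * (Real.exp (k' * s) * Real.sqrt (Real.exp (2 * k' * s) * v s + δ)) :=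
          mul_le_mul_of_nonneg_left (mul_le_mul_of_nonneg_left h3 (Real.exp_nonneg _))
            (by positivity)
      _ = a * M * Real.exp (k' * s) * (2 * Real.sqrt (Real.exp (2 * k' * s) * v s + δ)) := by ring
  -- G is monotone on [0, ∞)
  have hmono : MonotoneOn G (Set.Ici (0 : ℝ)) := by
    apply monotoneOn_of_deriv_nonneg (convex_Ici 0)
    · intro s hs
      exact ((hGd s hs).continuousAt).continuousWithinAt
    · intro s hs
      rw [interior_Ici] at hs
      exact ((hGd s (le_of_lt hs)).differentiableAt).differentiableWithinAt
    · intro s hs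
      rw [interior_Ici] at hs
      rw [(hGd s (le_of_lt hs)).deriv]
      exact hG0 s (le_of_lt hs)
  have := hmono (Set.self_mem_Ici) (Set.mem_Ici.2 ht) ht
  have hφ0 : φ 0 = Real.sqrt (v 0 + δ) := by simp [φ]
  simp only [hG, hφ0, Real.exp_zero, mul_zero, mul_one] at this ⊢
  have : a * M / k' * 1 - Real.sqrt (v 0 + δ) ≤ a * M / k' * Real.exp (k' * t) - φ t := by
    simpa using this
  simp only [φ] at this
  linarith

theorem stmt10 (k' a M : ℝ) (hk : 0 < k') (ha : 0 < a) (hM : 0 < M)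
    (v v' : ℝ → ℝ) (hnn : ∀ t : ℝ, 0 ≤ t → 0 ≤ v t)
    (hd : ∀ t : ℝ, 0 ≤ t → HasDerivAt v (v' t) t)
    (hineq : ∀ t : ℝ, 0 ≤ t → v' t ≤ -2 * k' * v t + 2 * a * M * Real.sqrt (v t)) :
    (∀ t : ℝ, 0 ≤ t → Real.sqrt (v t) ≤
      Real.sqrt (v 0) * Real.exp (-(k' * t)) + (a * M / k') * (1 - Real.exp (-(k' * t)))) ∧
    Filter.limsup (fun t => Real.sqrt (v t)) Filter.atTop ≤ a * M / k' := by
  have main : ∀ t : ℝ, 0 ≤ t → Real.sqrt (v t) ≤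
      Real.sqrt (v 0) * Real.exp (-(k' * t)) + (a * M / k') * (1 - Real.exp (-(k' * t))) := by
    intro t ht
    -- first : exp(k't) * sqrt(v t) ≤ sqrt(v 0) + (aM/k')(exp(k't)-1)
    have key : Real.exp (k' * t) * Real.sqrt (v t) ≤
        Real.sqrt (v 0) + (a * M / k') * (Real.exp (k' * t) - 1) := by
      apply le_of_forall_pos_le_add
      intro ε hε
      have hkey := stmt10_key k' a M hk ha hM v v' hnn hd hineq (ε ^ 2) (by positivity) t ht
      have h1 : Real.exp (k' * t) * Real.sqrt (v t) =
          Real.sqrt (Real.exp (2 * k' * t) * v t) := by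
        have hexp2 : Real.exp (2 * k' * t) = Real.exp (k' * t) ^ 2 := by
          rw [sq, ← Real.exp_add]; ring_nf
        rw [hexp2, Real.sqrt_mul (by positivity), Real.sqrt_sq (Real.exp_nonneg _)]
      have h2 : Real.sqrt (Real.exp (2 * k' * t) * v t) ≤
          Real.sqrt (Real.exp (2 * k' * t) * v t + ε ^ 2) :=
        Real.sqrt_le_sqrt (le_add_of_nonneg_right (by positivity))
      have h3 : Real.sqrt (v 0 + ε ^ 2) ≤ Real.sqrt (v 0) + ε := by
        have hle : v 0 + ε ^ 2 ≤ (Real.sqrt (v 0) + ε) ^ 2 := by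
          have := Real.sq_sqrt (hnn 0 le_rfl)
          nlinarith [Real.sqrt_nonneg (v 0)]
        have := Real.sqrt_le_sqrt hle
        rwa [Real.sqrt_sq (by positivity)] at this
      rw [h1]
      calc Real.sqrt (Real.exp (2 * k' * t) * v t)
          ≤ Real.sqrt (Real.exp (2 * k' * t) * v t + ε ^ 2) := h2
        _ ≤ Real.sqrt (v 0 + ε ^ 2) + (a * M / k') * (Real.exp (k' * t) - 1) := hkey
        _ ≤ Real.sqrt (v 0) + (a * M / k') * (Real.exp (k' * t) - 1) + ε := by linarith
    have hepos : 0 < Real.exp (k' * t) := Real.exp_pos _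
    have hneg : Real.exp (-(k' * t)) = (Real.exp (k' * t))⁻¹ := by
      rw [Real.exp_neg]
    rw [hneg]
    calc Real.sqrt (v t) = Real.exp (k' * t) * Real.sqrt (v t) / Real.exp (k' * t) := by
          field_simp
      _ ≤ (Real.sqrt (v 0) + (a * M / k') * (Real.exp (k' * t) - 1)) / Real.exp (k' * t) := by
          gcongr
      _ = Real.sqrt (v 0) * (Real.exp (k' * t))⁻¹ +
            (a * M / k') * (1 - (Real.exp (k' * t))⁻¹) := by
          field_simp
  refine ⟨main, ?_⟩
  apply le_of_forall_pos_le_add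
  intro ε hε
  have hcob : Filter.IsCoboundedUnder (· ≤ ·) Filter.atTop (fun t => Real.sqrt (v t)) :=
    Filter.isCoboundedUnder_le_of_eventually_le Filter.atTop (x := 0)
      (by filter_upwards with t using Real.sqrt_nonneg _)
  apply Filter.limsup_le_of_le hcob
  have htend : Filter.Tendsto (fun t : ℝ => Real.sqrt (v 0) * Real.exp (-(k' * t)))
      Filter.atTop (nhds 0) := by
    have : Filter.Tendsto (fun t : ℝ => -(k' * t)) Filter.atTop Filter.atBot := by
      apply Filter.tendsto_neg_atBot_iff.2
      exact Filter.Tendsto.const_mul_atTop hk Filter.tendsto_id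
    have := Real.tendsto_exp_atBot.comp this
    simpa using this.const_mul (Real.sqrt (v 0))
  have hsmall : ∀ᶠ t : ℝ in Filter.atTop, Real.sqrt (v 0) * Real.exp (-(k' * t)) ≤ ε := by
    have := htend.eventually_le_const hε
    filter_upwards [this] with t h using h
  filter_upwards [hsmall, Filter.eventually_ge_atTop (0 : ℝ)] with t h1 h2
  have := main t h2
  have hbound : (a * M / k') * (1 - Real.exp (-(k' * t))) ≤ a * M / k' := by
    have h1' : 0 < Real.exp (-(k' * t)) := Real.exp_pos _
    have h2' : 0 ≤ a * M / k' := by positivity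
    nlinarith
  linarith
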